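/- Let q ≥ 2 and r, s, t, u be integers. Define Ω_{r,s,t,u} = {(i,j,k) ∈ ℤ³ : −r ≤ i, −s ≤ i + (q²+q)k < −s + (q²+q), −t ≤ qi + (q²+q)j + (q+1)k < −t + (q²+q), −u ≤ −q²i − (q³−q)j − (q³+q²−q−1)k}. Then #Ω_{r,s,t,u} = #Ω_{u,t,s,r}. -/
import Mathlib


/-- The lattice point set Ω_{r,s,t,u}: (i,j,k) with −r ≤ i,
    −s ≤ i+(q²+q)k < −s+(q²+q), −t ≤ qi+(q²+q)j+(q+1)k < −t+(q²+q),
    −u ≤ −q²i−(q³−q)j−(q³+q²−q−1)k. -/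
def Omega (q r s t u : ℤ) : Set (ℤ × ℤ × ℤ) :=
  {p | -r ≤ p.1 ∧
       -s ≤ p.1 + (q ^ 2 + q) * p.2.2 ∧
       p.1 + (q ^ 2 + q) * p.2.2 < -s + (q ^ 2 + q) ∧
       -t ≤ q * p.1 + (q ^ 2 + q) * p.2.1 + (q + 1) * p.2.2 ∧
       q * p.1 + (q ^ 2 + q) * p.2.1 + (q + 1) * p.2.2 < -t + (q ^ 2 + q) ∧
       -u ≤ -q ^ 2 * p.1 - (q ^ 3 - q) * p.2.1 - (q ^ 3 + q ^ 2 - q - 1) * p.2.2}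

/-- The symmetry map. -/
def Tmap (q : ℤ) (p : ℤ × ℤ × ℤ) : ℤ × ℤ × ℤ :=
  (-q ^ 2 * p.1 - (q ^ 3 - q) * p.2.1 - (q ^ 3 + q ^ 2 - q - 1) * p.2.2,
   (q - 1) * p.1 + (q ^ 2 - q - 1) * p.2.1 + (q ^ 2 - 1) * p.2.2,
   p.1 + q * p.2.1 + q * p.2.2)

lemma Tmap_invol (q : ℤ) (p : ℤ × ℤ × ℤ) : Tmap q (Tmap q p) = p := by
  obtain ⟨i, j, k⟩ := p
  simp only [Tmap, Prod.mk.injEq]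
  refine ⟨by ring, by ring, by ring⟩

lemma Tmap_mem (q r s t u : ℤ) (p : ℤ × ℤ × ℤ) (hp : p ∈ Omega q r s t u) :
    Tmap q p ∈ Omega q u t s r := by
  obtain ⟨i, j, k⟩ := p
  obtain ⟨h1, h2, h3, h4, h5, h6⟩ := hp
  simp only [Omega, Tmap, Set.mem_setOf_eq] at *
  refine ⟨by linarith, ?_, ?_, ?_, ?_, ?_⟩
  · have : -q ^ 2 * i - (q ^ 3 - q) * j - (q ^ 3 + q ^ 2 - q - 1) * k +
        (q ^ 2 + q) * (i + q * j + q * k) =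
        q * i + (q ^ 2 + q) * j + (q + 1) * k := by ring
    linarith [this]
  · have : -q ^ 2 * i - (q ^ 3 - q) * j - (q ^ 3 + q ^ 2 - q - 1) * k +
        (q ^ 2 + q) * (i + q * j + q * k) =
        q * i + (q ^ 2 + q) * j + (q + 1) * k := by ring
    linarith [this]
  · have : q * (-q ^ 2 * i - (q ^ 3 - q) * j - (q ^ 3 + q ^ 2 - q - 1) * k) +
        (q ^ 2 + q) * ((q - 1) * i + (q ^ 2 - q - 1) * j + (q ^ 2 - 1) * k) +
        (q + 1) * (i + q * j + q * k) = i + (q ^ 2 + q) * k := by ring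
    linarith [this]
  · have : q * (-q ^ 2 * i - (q ^ 3 - q) * j - (q ^ 3 + q ^ 2 - q - 1) * k) +
        (q ^ 2 + q) * ((q - 1) * i + (q ^ 2 - q - 1) * j + (q ^ 2 - 1) * k) +
        (q + 1) * (i + q * j + q * k) = i + (q ^ 2 + q) * k := by ring
    linarith [this]
  · have : -q ^ 2 * (-q ^ 2 * i - (q ^ 3 - q) * j - (q ^ 3 + q ^ 2 - q - 1) * k) -
        (q ^ 3 - q) * ((q - 1) * i + (q ^ 2 - q - 1) * j + (q ^ 2 - 1) * k) -
        (q ^ 3 + q ^ 2 - q - 1) * (i + q * j + q * k) = i := by ring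
    linarith [this]

/-- The lattice point set Ω is symmetric: #Ω_{r,s,t,u} = #Ω_{u,t,s,r}. -/
theorem stmt_10 (q r s t u : ℤ) (hq : 2 ≤ q) :
    (Omega q r s t u).ncard = (Omega q u t s r).ncard := by
  have himg : Omega q u t s r = Tmap q '' Omega q r s t u := by
    ext p
    constructor
    · intro hp
      exact ⟨Tmap q p, Tmap_mem q u t s r p hp, Tmap_invol q p⟩
    · rintro ⟨x, hx, rfl⟩
      exact Tmap_mem q r s t u x hx
  have hinj : Function.Injective (Tmap q) :=
    Function.LeftInverse.injective (Tmap_invol q)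
  rw [himg, Set.ncard_image_of_injective _ hinj]
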